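/- Let γ ∈ (−2,0] and let κ : ℝ³ → ℝ be measurable with 0 ≤ κ(x) ≤ κ₂ for all x ∈ ℝ³. Let f : ℝ³×ℝ³ → [0,∞) be measurable with ∫_{ℝ⁶} (1+|v|²) f(x,v) dx dv ≤ E₀ < ∞. Then there exists a constant C > 0, depending only on γ, such that for all (x,v) ∈ ℝ³×ℝ³ the operator norm of the matrix A[f](x,v) satisfies |A[f](x,v)| ≤ C κ₂ E₀ ⟨v⟩^{γ+2}. -/
import Mathlib


open MeasureTheory Real

noncomputable section

abbrev E3 : Type := EuclideanSpace ℝ (Fin 3)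

/-- `⟨v⟩ = √(1+|v|²)`. -/
def jap (x : E3) : ℝ := Real.sqrt (1 + ‖x‖ ^ 2)

/-- The Landau kernel `N(w) = |w|^{γ+2} (Id - w⊗w/|w|²)` (extended by `0` at `w = 0`). -/
def Nker (γ : ℝ) (w : E3) : Matrix (Fin 3) (Fin 3) ℝ :=
  Matrix.of fun i j => ‖w‖ ^ (γ + 2) * ((if i = j then (1 : ℝ) else 0) - w i * w j / ‖w‖ ^ 2)

/-- The diffusion matrix `A[f](x,v) = ∫ N(v-v*) κ(x-x*) f(x*,v*) dx* dv*`. -/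
def Amat (γ : ℝ) (κ : E3 → ℝ) (f : E3 × E3 → ℝ) (x v : E3) : Matrix (Fin 3) (Fin 3) ℝ :=
  Matrix.of fun i j => ∫ p : E3 × E3, Nker γ (v - p.2) i j * κ (x - p.1) * f p

lemma jap_one_le (v : E3) : 1 ≤ jap v := by
  rw [jap]
  exact (Real.le_sqrt zero_le_one (by positivity)).mpr (by nlinarith [sq_nonneg ‖v‖])

lemma jap_nonneg (v : E3) : 0 ≤ jap v := le_trans zero_le_one (jap_one_le v)

lemma norm_le_jap (v : E3) : ‖v‖ ≤ jap v := by
  rw [jap]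
  exact (Real.le_sqrt (norm_nonneg v) (by positivity)).mpr (by nlinarith)

lemma jap_sq (v : E3) : jap v ^ 2 = 1 + ‖v‖ ^ 2 := by
  rw [jap, Real.sq_sqrt (by positivity)]

lemma coord_abs_le_norm (x : E3) (i : Fin 3) : |x i| ≤ ‖x‖ := by
  rw [EuclideanSpace.norm_eq, ← Real.sqrt_sq_eq_abs]
  apply Real.sqrt_le_sqrt
  exact Finset.single_le_sum (f := fun j => ‖x j‖^2) (fun j _ => by positivity)
    (Finset.mem_univ i) |>.trans_eq' (by rw [Real.norm_eq_abs, sq_abs])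

lemma Nker_abs_le (γ : ℝ) (w : E3) (i j : Fin 3) :
    |Nker γ w i j| ≤ 2 * ‖w‖ ^ (γ + 2) := by
  have h1 : (0:ℝ) ≤ ‖w‖ ^ (γ + 2) := Real.rpow_nonneg (norm_nonneg w) _
  rw [Nker, Matrix.of_apply, abs_mul, abs_of_nonneg h1, mul_comm]
  apply mul_le_mul_of_nonneg_right _ h1
  have h2 : |w i * w j / ‖w‖ ^ 2| ≤ 1 := by
    rcases eq_or_ne w 0 with rfl | hw
    · simp
    · have hw' : 0 < ‖w‖ := norm_pos_iff.mpr hw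
      rw [abs_div, abs_of_nonneg (by positivity : (0:ℝ) ≤ ‖w‖^2), div_le_one (by positivity)]
      calc |w i * w j| = |w i| * |w j| := abs_mul _ _
        _ ≤ ‖w‖ * ‖w‖ := mul_le_mul (coord_abs_le_norm w i) (coord_abs_le_norm w j)
            (abs_nonneg _) (norm_nonneg w)
        _ = ‖w‖ ^ 2 := (sq ‖w‖).symm
  calc |(if i = j then (1:ℝ) else 0) - w i * w j / ‖w‖ ^ 2|
      ≤ |(if i = j then (1:ℝ) else 0)| + |w i * w j / ‖w‖ ^ 2| := abs_sub _ _
    _ ≤ 1 + 1 := add_le_add (by split <;> simp) h2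
    _ = 2 := by norm_num

lemma rpow_kernel_le (γ : ℝ) (hγ : γ ∈ Set.Ioc (-2 : ℝ) 0) (v u : E3) :
    ‖v - u‖ ^ (γ + 2) ≤ 4 * jap v ^ (γ + 2) * (1 + ‖u‖ ^ 2) := by
  have hγ0 : 0 ≤ γ + 2 := by linarith [hγ.1]
  have hγ2 : γ + 2 ≤ 2 := by linarith [hγ.2]
  have h1 : ‖v - u‖ ≤ 2 * jap v * jap u := by
    have := norm_sub_le v u
    have h2 : jap v ≤ jap v * jap u :=
      le_mul_of_one_le_right (jap_nonneg v) (jap_one_le u)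
    have h3 : jap u ≤ jap v * jap u :=
      le_mul_of_one_le_left (jap_nonneg u) (jap_one_le v)
    have := norm_le_jap v
    have := norm_le_jap u
    nlinarith
  calc ‖v - u‖ ^ (γ + 2) ≤ (2 * jap v * jap u) ^ (γ + 2) :=
        Real.rpow_le_rpow (norm_nonneg _) h1 hγ0
    _ = 2 ^ (γ+2) * jap v ^ (γ+2) * jap u ^ (γ+2) := by
        rw [Real.mul_rpow (mul_nonneg (by norm_num) (jap_nonneg v)) (jap_nonneg u),
          Real.mul_rpow (by norm_num) (jap_nonneg v)]
    _ ≤ 2 ^ (2:ℝ) * jap v ^ (γ+2) * jap u ^ (2:ℝ) := by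
        apply mul_le_mul
        · exact mul_le_mul_of_nonneg_right
            (Real.rpow_le_rpow_of_exponent_le (by norm_num) hγ2)
            (Real.rpow_nonneg (jap_nonneg v) _)
        · exact Real.rpow_le_rpow_of_exponent_le (jap_one_le u) hγ2
        · exact Real.rpow_nonneg (jap_nonneg u) _
        · exact mul_nonneg (by positivity) (Real.rpow_nonneg (jap_nonneg v) _)
    _ = 4 * jap v ^ (γ+2) * (1 + ‖u‖ ^ 2) := by
        rw [show ((2:ℝ) ^ (2:ℝ)) = 4 by
          rw [show (2:ℝ) = ((2:ℕ):ℝ) by norm_num, Real.rpow_natCast]; norm_num,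
          show (jap u ^ (2:ℝ)) = jap u ^ (2:ℕ) by
            rw [← Real.rpow_natCast]; norm_num,
          jap_sq]

/-- Upper bound on the (ℓ² → ℓ²) operator norm of the diffusion matrix:
`|A[f](x,v)| ≤ C κ₂ E₀ ⟨v⟩^{γ+2}` with `C = C(γ)`. -/
theorem statement7 (γ κ₂ E₀ : ℝ) (hγ : γ ∈ Set.Ioc (-2 : ℝ) 0)
    (κ : E3 → ℝ) (hκ_meas : Measurable κ) (hκ : ∀ x : E3, 0 ≤ κ x ∧ κ x ≤ κ₂)
    (f : E3 × E3 → ℝ) (hf_meas : Measurable f) (hf_nonneg : ∀ p, 0 ≤ f p)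
    (hE_int : Integrable (fun p : E3 × E3 => (1 + ‖p.2‖ ^ 2) * f p))
    (hE : ∫ p : E3 × E3, (1 + ‖p.2‖ ^ 2) * f p ≤ E₀) :
    ∃ C : ℝ, 0 < C ∧ ∀ x v : E3,
      ‖Matrix.toEuclideanCLM (𝕜 := ℝ) (Amat γ κ f x v)‖ ≤ C * κ₂ * E₀ * jap v ^ (γ + 2) := by
  have hκ₂ : 0 ≤ κ₂ := le_trans (hκ 0).1 (hκ 0).2
  have hI0 : 0 ≤ ∫ p : E3 × E3, (1 + ‖p.2‖ ^ 2) * f p :=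
    integral_nonneg fun p => mul_nonneg (by positivity) (hf_nonneg p)
  have hE₀ : 0 ≤ E₀ := le_trans hI0 hE
  refine ⟨48, by norm_num, fun x v => ?_⟩
  set B : ℝ := 8 * κ₂ * E₀ * jap v ^ (γ + 2) with hBdef
  have hjv : 0 ≤ jap v ^ (γ + 2) := Real.rpow_nonneg (jap_nonneg v) _
  have hB : 0 ≤ B := by positivity
  -- entrywise bound
  have hentry : ∀ i j, |Amat γ κ f x v i j| ≤ B := by
    intro i j
    have hbd : ∀ p : E3 × E3,
        ‖Nker γ (v - p.2) i j * κ (x - p.1) * f p‖ ≤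
          (8 * κ₂ * jap v ^ (γ + 2)) * ((1 + ‖p.2‖ ^ 2) * f p) := by
      intro p
      rw [Real.norm_eq_abs, abs_mul, abs_mul]
      have h1 : |Nker γ (v - p.2) i j| ≤ 2 * ‖v - p.2‖ ^ (γ+2) := Nker_abs_le γ _ i j
      have h2 : ‖v - p.2‖ ^ (γ+2) ≤ 4 * jap v ^ (γ+2) * (1 + ‖p.2‖ ^ 2) :=
        rpow_kernel_le γ hγ v p.2
      have h3 : |κ (x - p.1)| ≤ κ₂ := by
        rw [abs_of_nonneg (hκ _).1]; exact (hκ _).2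
      have h4 : |f p| = f p := abs_of_nonneg (hf_nonneg p)
      rw [h4]
      calc |Nker γ (v - p.2) i j| * |κ (x - p.1)| * f p
          ≤ (2 * (4 * jap v ^ (γ+2) * (1 + ‖p.2‖ ^ 2))) * κ₂ * f p := by
            apply mul_le_mul_of_nonneg_right _ (hf_nonneg p)
            apply mul_le_mul (h1.trans (by nlinarith [Real.rpow_nonneg (norm_nonneg (v - p.2)) (γ+2)]))
              h3 (abs_nonneg _) (by positivity)
        _ = (8 * κ₂ * jap v ^ (γ + 2)) * ((1 + ‖p.2‖ ^ 2) * f p) := by ring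
    have hint : Integrable (fun p : E3 × E3 =>
        (8 * κ₂ * jap v ^ (γ + 2)) * ((1 + ‖p.2‖ ^ 2) * f p)) := hE_int.const_mul _
    have := norm_integral_le_of_norm_le hint (Filter.Eventually.of_forall hbd)
    rw [integral_const_mul] at this
    calc |Amat γ κ f x v i j| = ‖∫ p : E3 × E3, Nker γ (v - p.2) i j * κ (x - p.1) * f p‖ := by
          rw [Amat, Matrix.of_apply, Real.norm_eq_abs]
      _ ≤ (8 * κ₂ * jap v ^ (γ + 2)) * ∫ p : E3 × E3, (1 + ‖p.2‖ ^ 2) * f p := this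
      _ ≤ (8 * κ₂ * jap v ^ (γ + 2)) * E₀ := by
          apply mul_le_mul_of_nonneg_left hE (by positivity)
      _ = B := by ring
  -- operator norm bound
  have hop : ‖Matrix.toEuclideanCLM (𝕜 := ℝ) (Amat γ κ f x v)‖ ≤ 6 * B := by
    apply ContinuousLinearMap.opNorm_le_bound _ (by positivity)
    intro y
    have hcomp : ∀ i : Fin 3, ‖(Matrix.toEuclideanCLM (𝕜 := ℝ) (Amat γ κ f x v) y) i‖
        ≤ 3 * B * ‖y‖ := by
      intro i
      have : (Matrix.toEuclideanCLM (𝕜 := ℝ) (Amat γ κ f x v) y) i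
          = ∑ j, Amat γ κ f x v i j * y j := rfl
      rw [this, Real.norm_eq_abs]
      calc |∑ j, Amat γ κ f x v i j * y j| ≤ ∑ j, |Amat γ κ f x v i j * y j| :=
            Finset.abs_sum_le_sum_abs _ _
        _ ≤ ∑ _j : Fin 3, B * ‖y‖ := by
            apply Finset.sum_le_sum
            intro j _
            rw [abs_mul]
            exact mul_le_mul (hentry i j) (coord_abs_le_norm y j) (abs_nonneg _) hB
        _ = 3 * B * ‖y‖ := by simp [Finset.sum_const]; ring
    calc ‖Matrix.toEuclideanCLM (𝕜 := ℝ) (Amat γ κ f x v) y‖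
        = Real.sqrt (∑ i, ‖(Matrix.toEuclideanCLM (𝕜 := ℝ) (Amat γ κ f x v) y) i‖ ^ 2) :=
          EuclideanSpace.norm_eq _
      _ ≤ Real.sqrt (∑ _i : Fin 3, (3 * B * ‖y‖) ^ 2) := by
          apply Real.sqrt_le_sqrt
          apply Finset.sum_le_sum
          intro i _
          exact pow_le_pow_left₀ (norm_nonneg _) (hcomp i) 2
      _ = Real.sqrt 3 * (3 * B * ‖y‖) := by
          rw [Finset.sum_const, Finset.card_univ, Fintype.card_fin, nsmul_eq_mul,
            Real.sqrt_mul (by norm_num), Real.sqrt_sq (by positivity)]; norm_num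
      _ ≤ 2 * (3 * B * ‖y‖) := by
          apply mul_le_mul_of_nonneg_right _ (by positivity)
          rw [show (2:ℝ) = Real.sqrt 4 by rw [show (4:ℝ) = 2^2 by norm_num, Real.sqrt_sq]; norm_num]
          exact Real.sqrt_le_sqrt (by norm_num)
      _ = 6 * B * ‖y‖ := by ring
  calc ‖Matrix.toEuclideanCLM (𝕜 := ℝ) (Amat γ κ f x v)‖ ≤ 6 * B := hop
    _ = 48 * κ₂ * E₀ * jap v ^ (γ + 2) := by rw [hBdef]; ring
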